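/- There exists a subset A of B_1(2^ω, 2) (with the pointwise convergence topology) which is homeomorphic to the Baire space ω^ω, which is not uniformly recoverable, and yet the evaluation map φ : 2^ω × A → 2, φ(x,f) = f(x), is Baire class one. -/

import Mathlib

open Filter Topology Set Classical

noncomputable section
open scoped Classical

/-- A set is Fσ if it is a countable union of closed sets. -/
def IsFsigma {X : Type*} [TopologicalSpace X] (s : Set X) : Prop :=
  ∃ F : ℕ → Set X, (∀ n, IsClosed (F n)) ∧ s = ⋃ n, F n

/-- A function is Baire class one if the preimage of every open set is Fσ. -/
def BaireClassOneFn {X Y : Type*} [TopologicalSpace X] [TopologicalSpace Y] (f : X → Y) : Prop :=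
  ∀ U : Set Y, IsOpen U → IsFsigma (f ⁻¹' U)

/-- A countable basis `(W m)` is good if for every open `U` and `x ∈ U` there is `m₀`
such that for all `m ≥ m₀`, `x ∈ W m` implies `W m ⊆ U`. -/
def IsGoodBasis {X : Type*} [TopologicalSpace X] (W : ℕ → Set X) : Prop :=
  TopologicalSpace.IsTopologicalBasis (Set.range W) ∧
  ∀ U : Set X, IsOpen U → ∀ x ∈ U, ∃ m₀, ∀ m ≥ m₀, x ∈ W m → W m ⊆ U

/-- The path to `x` based on the dense sequence `D`, relative to the good basis `W`. -/
noncomputable def pathSeq {X : Type*} (W : ℕ → Set X) (D : ℕ → X) (x : X) : ℕ → X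
  | 0 => D 0
  | n + 1 =>
    if x = pathSeq W D x n then pathSeq W D x n
    else D (sInf {p | ∃ m, x ∈ W m ∧ D p ∈ W m ∧ ∀ k, k ≤ n → pathSeq W D x k ∉ W m})
  termination_by n => n
  decreasing_by all_goals omega

/-- `f` is recoverable with respect to `D` (and the good basis `W`). -/
def RecoverableWith {X Y : Type*} [TopologicalSpace Y] (W : ℕ → Set X) (D : ℕ → X)
    (f : X → Y) : Prop :=
  ∀ x : X, Tendsto (fun n => f (pathSeq W D x n)) atTop (𝓝 (f x))

namespace Lec


/-- block boundaries: `bl a m` = position of the `m`-th `1` in `J a`. -/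
def bl (a : ℕ → ℕ) : ℕ → ℕ
  | 0 => 0
  | m + 1 => bl a m + a m + 2

lemma bl_zero (a : ℕ → ℕ) : bl a 0 = 0 := rfl
lemma bl_succ (a : ℕ → ℕ) (m : ℕ) : bl a (m + 1) = bl a m + a m + 2 := rfl

lemma bl_lt_succ (a : ℕ → ℕ) (m : ℕ) : bl a m < bl a (m + 1) := by
  rw [bl_succ]; omega

lemma bl_strictMono (a : ℕ → ℕ) : StrictMono (bl a) :=
  strictMono_nat_of_lt_succ (bl_lt_succ a)

lemma bl_lt_bl {a : ℕ → ℕ} {k m : ℕ} (h : k < m) : bl a k < bl a m :=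
  bl_strictMono a h

lemma bl_le_bl {a : ℕ → ℕ} {k m : ℕ} (h : k ≤ m) : bl a k ≤ bl a m :=
  (bl_strictMono a).monotone h

lemma self_le_bl (a : ℕ → ℕ) (k : ℕ) : k ≤ bl a k := by
  induction k with
  | zero => simp [bl_zero]
  | succ n ih => rw [bl_succ]; omega

lemma bl_congr {a b : ℕ → ℕ} {m : ℕ} (h : ∀ i < m, a i = b i) :
    ∀ k ≤ m, bl a k = bl b k := by
  intro k hk
  induction k with
  | zero => rfl
  | succ n ih =>
    rw [bl_succ, bl_succ, ih (by omega), h n (by omega)]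

/-- the point `t_{a|m}` : ones exactly at `bl a k`, `k ≤ m`, zero afterwards. -/
def tP (a : ℕ → ℕ) (m : ℕ) : ℕ → Bool :=
  fun n => decide (∃ k, k ≤ m ∧ bl a k = n)

/-- the point `J a` : ones exactly at all `bl a k`. -/
def JP (a : ℕ → ℕ) : ℕ → Bool :=
  fun n => decide (∃ k, bl a k = n)

lemma tP_true_iff {a : ℕ → ℕ} {m n : ℕ} : tP a m n = true ↔ ∃ k, k ≤ m ∧ bl a k = n := by
  simp [tP]

lemma JP_true_iff {a : ℕ → ℕ} {n : ℕ} : JP a n = true ↔ ∃ k, bl a k = n := by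
  simp [JP]

lemma tP_congr {a b : ℕ → ℕ} {m : ℕ} (h : ∀ i < m, a i = b i) : tP a m = tP b m := by
  funext n
  have hbl : ∀ k ≤ m, bl a k = bl b k := bl_congr h
  simp only [tP, decide_eq_decide]
  constructor
  · rintro ⟨k, hk, rfl⟩; exact ⟨k, hk, (hbl k hk).symm⟩
  · rintro ⟨k, hk, rfl⟩; exact ⟨k, hk, hbl k hk⟩

lemma tP_at_bl {a : ℕ → ℕ} {m k : ℕ} (h : k ≤ m) : tP a m (bl a k) = true :=
  tP_true_iff.2 ⟨k, h, rfl⟩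

lemma JP_at_bl (a : ℕ → ℕ) (k : ℕ) : JP a (bl a k) = true :=
  JP_true_iff.2 ⟨k, rfl⟩

lemma tP_false_at_bl_succ (a : ℕ → ℕ) (m : ℕ) : tP a m (bl a (m + 1)) = false := by
  rw [← Bool.not_eq_true, tP_true_iff]
  rintro ⟨k, hk, hbl⟩
  exact absurd hbl (Nat.ne_of_lt (bl_lt_bl (by omega)))

/-- `tP a m` and `JP a` agree strictly below `bl a (m+1)`. -/
lemma tP_agree_JP {a : ℕ → ℕ} {m n : ℕ} (h : n < bl a (m + 1)) : tP a m n = JP a n := by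
  simp only [tP, JP, decide_eq_decide]
  constructor
  · rintro ⟨k, _, rfl⟩; exact ⟨k, rfl⟩
  · rintro ⟨k, rfl⟩
    refine ⟨k, ?_, rfl⟩
    by_contra hk
    have := bl_le_bl (a := a) (show m + 1 ≤ k by omega)
    omega

lemma JP_ne_tP (a b : ℕ → ℕ) (m : ℕ) : JP a ≠ tP b m := by
  intro h
  set k := bl b m + 1 with hk
  have h1 : JP a (bl a k) = true := JP_at_bl a k
  have h2 : tP b m (bl a k) = true := by rw [← h]; exact h1
  rcases tP_true_iff.1 h2 with ⟨j, hj, hbl⟩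
  have : bl b j ≤ bl b m := bl_le_bl hj
  have : k ≤ bl a k := self_le_bl a k
  omega

lemma bl_eq_of_tP_eq {a b : ℕ → ℕ} {m m' : ℕ} (h : tP a m = tP b m') :
    ∀ k, k ≤ m → k ≤ m' → bl a k = bl b k := by
  intro k
  induction k with
  | zero => intro _ _; rfl
  | succ n ih =>
    intro h1 h2
    have ihn := ih (by omega) (by omega)
    have hab : bl b (n + 1) ≤ bl a (n + 1) := by
      have ht : tP a m (bl a (n + 1)) = true := tP_at_bl h1
      rw [h] at ht
      rcases tP_true_iff.1 ht with ⟨j, hj, hbl⟩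
      have hj1 : n + 1 ≤ j := by
        by_contra hc
        have h3 : bl b j ≤ bl b n := bl_le_bl (by omega)
        have h4 : bl a n < bl a (n + 1) := bl_lt_bl (by omega)
        omega
      calc bl b (n + 1) ≤ bl b j := bl_le_bl hj1
        _ = bl a (n + 1) := hbl
    have hba : bl a (n + 1) ≤ bl b (n + 1) := by
      have ht : tP b m' (bl b (n + 1)) = true := tP_at_bl h2
      rw [← h] at ht
      rcases tP_true_iff.1 ht with ⟨j, hj, hbl⟩
      have hj1 : n + 1 ≤ j := by
        by_contra hc
        have h3 : bl a j ≤ bl a n := bl_le_bl (by omega)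
        have h4 : bl b n < bl b (n + 1) := bl_lt_bl (by omega)
        omega
      calc bl a (n + 1) ≤ bl a j := bl_le_bl hj1
        _ = bl b (n + 1) := hbl
    omega

lemma tP_inj {a b : ℕ → ℕ} {m m' : ℕ} (h : tP a m = tP b m') :
    m = m' ∧ ∀ i < m, a i = b i := by
  have hbl := bl_eq_of_tP_eq h
  have hmm : m = m' := by
    by_contra hne
    rcases Nat.lt_or_ge m m' with hlt | hge
    · have ht : tP b m' (bl b (m + 1)) = true := tP_at_bl (by omega)
      rw [← h] at ht
      rcases tP_true_iff.1 ht with ⟨j, hj, hblj⟩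
      have : bl a j = bl b j := hbl j hj (by omega)
      have : bl b j < bl b (m + 1) := by
        have := bl_le_bl (a := b) hj
        have := bl_lt_bl (a := b) (show m < m + 1 by omega)
        omega
      omega
    · have hlt : m' < m := by omega
      have ht : tP a m (bl a (m' + 1)) = true := tP_at_bl (by omega)
      rw [h] at ht
      rcases tP_true_iff.1 ht with ⟨j, hj, hblj⟩
      have : bl b j = bl a j := (hbl j (by omega) hj).symm
      have : bl a j < bl a (m' + 1) := by
        have := bl_le_bl (a := a) hj
        have := bl_lt_bl (a := a) (show m' < m' + 1 by omega)
        omega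
      omega
  subst hmm
  refine ⟨rfl, ?_⟩
  intro i hi
  have h1 := hbl i (by omega) (by omega)
  have h2 := hbl (i + 1) (by omega) (by omega)
  rw [bl_succ, bl_succ] at h2
  omega

lemma JP_inj : Function.Injective JP := by
  intro a b h
  have hbl : ∀ k, bl a k = bl b k := by
    intro k
    induction k with
    | zero => rfl
    | succ n ih =>
      have hab : bl b (n + 1) ≤ bl a (n + 1) := by
        have ht : JP a (bl a (n + 1)) = true := JP_at_bl a _
        rw [h] at ht
        rcases JP_true_iff.1 ht with ⟨j, hbl⟩
        have hj1 : n + 1 ≤ j := by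
          by_contra hc
          have h3 : bl b j ≤ bl b n := bl_le_bl (by omega)
          have h4 : bl a n < bl a (n + 1) := bl_lt_bl (by omega)
          omega
        calc bl b (n + 1) ≤ bl b j := bl_le_bl hj1
          _ = bl a (n + 1) := hbl
      have hba : bl a (n + 1) ≤ bl b (n + 1) := by
        have ht : JP b (bl b (n + 1)) = true := JP_at_bl b _
        rw [← h] at ht
        rcases JP_true_iff.1 ht with ⟨j, hbl⟩
        have hj1 : n + 1 ≤ j := by
          by_contra hc
          have h3 : bl a j ≤ bl a n := bl_le_bl (by omega)
          have h4 : bl b n < bl b (n + 1) := bl_lt_bl (by omega)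
          omega
        calc bl a (n + 1) ≤ bl a j := bl_le_bl hj1
          _ = bl b (n + 1) := hbl
      omega
  funext i
  have h1 := hbl i
  have h2 := hbl (i + 1)
  rw [bl_succ, bl_succ] at h2
  omega

/-- the member functions of `A`. -/
def FF (a : ℕ → ℕ) : (ℕ → Bool) → Bool :=
  fun x => decide (∃ m, 1 ≤ m ∧ x = tP a m)

lemma FF_true_iff {a : ℕ → ℕ} {x : ℕ → Bool} :
    FF a x = true ↔ ∃ m, 1 ≤ m ∧ x = tP a m := by simp [FF]

lemma FF_tP {a : ℕ → ℕ} {m : ℕ} (h : 1 ≤ m) : FF a (tP a m) = true :=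
  FF_true_iff.2 ⟨m, h, rfl⟩

lemma FF_JP (a b : ℕ → ℕ) : FF a (JP b) = false := by
  rw [← Bool.not_eq_true, FF_true_iff]
  rintro ⟨m, _, hm⟩
  exact JP_ne_tP b a m hm

lemma FF_tP_iff {a b : ℕ → ℕ} {m : ℕ} :
    FF a (tP b m) = true ↔ 1 ≤ m ∧ ∀ i < m, b i = a i := by
  rw [FF_true_iff]
  constructor
  · rintro ⟨m', hm', heq⟩
    rcases tP_inj heq.symm with ⟨h1, h2⟩
    exact ⟨by omega, fun i hi => (h2 i (by omega)).symm⟩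
  · rintro ⟨h1, h2⟩
    exact ⟨m, h1, tP_congr h2⟩

lemma FF_inj : Function.Injective FF := by
  intro a b h
  funext i
  have h1 : FF b (tP a (i + 1)) = true := by rw [← h]; exact FF_tP (by omega)
  rcases FF_tP_iff.1 h1 with ⟨-, h2⟩
  exact h2 i (by omega)



lemma IsClosed.isFsigma' {Z : Type*} [TopologicalSpace Z] {s : Set Z} (h : IsClosed s) :
    IsFsigma s :=
  ⟨fun _ => s, fun _ => h, (Set.iUnion_const s).symm⟩

lemma isFsigma_iUnion_closed {Z : Type*} [TopologicalSpace Z] {ι : Type*} [Encodable ι]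
    (f : ι → Set Z) (h : ∀ i, IsClosed (f i)) : IsFsigma (⋃ i, f i) := by
  refine ⟨fun n => match Encodable.decode (α := ι) n with
    | some i => f i
    | none => ∅, fun n => ?_, ?_⟩
  · cases hd : Encodable.decode (α := ι) n with
    | none => simp only [hd]; exact isClosed_empty
    | some i => simp only [hd]; exact h i
  · ext x
    simp only [mem_iUnion]
    constructor
    · rintro ⟨i, hi⟩
      exact ⟨Encodable.encode i, by simp [Encodable.encodek]; exact hi⟩
    · rintro ⟨n, hn⟩
      cases hd : Encodable.decode (α := ι) n with
      | none => rw [hd] at hn; exact absurd hn (notMem_empty x)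
      | some i => rw [hd] at hn; exact ⟨i, hn⟩

lemma isFsigma_union {Z : Type*} [TopologicalSpace Z] {s t : Set Z}
    (hs : IsFsigma s) (ht : IsFsigma t) : IsFsigma (s ∪ t) := by
  rcases hs with ⟨F, hF, rfl⟩
  rcases ht with ⟨G, hG, rfl⟩
  refine ⟨fun n => F n ∪ G n, fun n => (hF n).union (hG n), ?_⟩
  ext x
  simp only [mem_union, mem_iUnion]
  constructor
  · rintro (⟨n, hn⟩ | ⟨n, hn⟩) <;> exact ⟨n, by simp [hn]⟩
  · rintro ⟨n, hn | hn⟩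
    · exact Or.inl ⟨n, hn⟩
    · exact Or.inr ⟨n, hn⟩

lemma isFsigma_open {Z : Type*} [TopologicalSpace Z] [TopologicalSpace.MetrizableSpace Z]
    {U : Set Z} (hU : IsOpen U) : IsFsigma U := by
  letI : MetricSpace Z := TopologicalSpace.metrizableSpaceMetric Z
  rcases eq_empty_or_nonempty Uᶜ with hc | hc
  · have : U = univ := by
      rw [← compl_compl U, hc, compl_empty]
    exact this ▸ IsClosed.isFsigma' isClosed_univ
  refine ⟨fun n => {x | ((n : ℝ) + 1)⁻¹ ≤ Metric.infDist x Uᶜ}, fun n => ?_, ?_⟩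
  · exact isClosed_le continuous_const (Metric.continuous_infDist_pt _)
  · ext x
    simp only [mem_iUnion, mem_setOf_eq]
    constructor
    · intro hx
      have hpos : 0 < Metric.infDist x Uᶜ := by
        rw [← (hU.isClosed_compl).notMem_iff_infDist_pos hc]
        simpa using hx
      rcases exists_nat_one_div_lt hpos with ⟨n, hn⟩
      refine ⟨n, le_of_lt ?_⟩
      rw [one_div] at hn
      exact_mod_cast hn
    · rintro ⟨n, hn⟩
      by_contra hx
      have : Metric.infDist x Uᶜ = 0 := Metric.infDist_zero_of_mem (by simpa using hx)
      rw [this] at hn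
      have : (0:ℝ) < ((n : ℝ) + 1)⁻¹ := by positivity
      linarith

/-! ### cylinders in `ℕ → Bool` -/

def Cyl (x : ℕ → Bool) (L : ℕ) : Set (ℕ → Bool) := {y | ∀ i < L, y i = x i}

lemma self_mem_Cyl (x : ℕ → Bool) (L : ℕ) : x ∈ Cyl x L := fun _ _ => rfl

lemma Cyl_anti {x : ℕ → Bool} {L L' : ℕ} (h : L ≤ L') : Cyl x L' ⊆ Cyl x L :=
  fun _ hy i hi => hy i (lt_of_lt_of_le hi h)

lemma Cyl_eq_Cyl {x y : ℕ → Bool} {L : ℕ} (h : y ∈ Cyl x L) : Cyl y L = Cyl x L := by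
  ext z
  constructor <;> intro hz i hi
  · rw [hz i hi, h i hi]
  · rw [hz i hi, ← h i hi]

lemma isOpen_Cyl (x : ℕ → Bool) (L : ℕ) : IsOpen (Cyl x L) := by
  have : Cyl x L = ⋂ i ∈ Finset.range L, (fun y : ℕ → Bool => y i) ⁻¹' {x i} := by
    ext y; simp [Cyl]
  rw [this]
  exact isOpen_biInter_finset fun i _ =>
    (continuous_apply i).isOpen_preimage _ (isOpen_discrete _)

lemma isClosed_Cyl (x : ℕ → Bool) (L : ℕ) : IsClosed (Cyl x L) := by
  have : Cyl x L = ⋂ i ∈ Finset.range L, (fun y : ℕ → Bool => y i) ⁻¹' {x i} := by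
    ext y; simp [Cyl]
  rw [this]
  exact isClosed_biInter fun i _ =>
    IsClosed.preimage (continuous_apply i) (isClosed_discrete _)

lemma Cyl_mem_nhds (x : ℕ → Bool) (L : ℕ) : Cyl x L ∈ 𝓝 x :=
  (isOpen_Cyl x L).mem_nhds (self_mem_Cyl x L)

lemma exists_Cyl_subset {U : Set (ℕ → Bool)} (hU : IsOpen U) {x : ℕ → Bool} (hx : x ∈ U) :
    ∃ L, Cyl x L ⊆ U := by
  obtain ⟨S, hS, hxS, hSU⟩ :=
    (isTopologicalBasis_pi
      (fun _ : ℕ => TopologicalSpace.isTopologicalBasis_opens (α := Bool))).exists_subset_of_mem_open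
      hx hU
  obtain ⟨V, F, hVo, rfl⟩ := hS
  refine ⟨F.sup id + 1, fun y hy => hSU ?_⟩
  intro i hi
  have hix : x i ∈ V i := hxS i hi
  have : y i = x i := hy i (by
    have := Finset.le_sup (f := id) hi
    simp only [id] at this
    omega)
  rwa [this]



def AA : Set ((ℕ → Bool) → Bool) := Set.range FF

/-! ### lists encoding finite prefixes -/

def prefixL (a : ℕ → ℕ) : ℕ → List ℕ
  | 0 => []
  | m + 1 => prefixL a m ++ [a m]

lemma prefixL_length (a : ℕ → ℕ) (m : ℕ) : (prefixL a m).length = m := by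
  induction m with
  | zero => rfl
  | succ n ih => simp [prefixL, ih]

lemma prefixL_getD {a : ℕ → ℕ} {m i : ℕ} (h : i < m) : (prefixL a m).getD i 0 = a i := by
  induction m with
  | zero => omega
  | succ n ih =>
    rcases Nat.lt_or_ge i n with hlt | hge
    · rw [prefixL, List.getD_append _ _ _ _ (by rw [prefixL_length]; exact hlt)]
      exact ih hlt
    · have hi : i = n := by omega
      subst hi
      rw [prefixL, List.getD_append_right _ _ _ _ (by rw [prefixL_length])]
      simp [prefixL_length]

/-- `tPL l` : the point `t_l` for a finite list `l`. -/
def tPL (l : List ℕ) : ℕ → Bool := tP (fun i => l.getD i 0) l.length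

lemma tPL_prefixL_append (a : ℕ → ℕ) (m v : ℕ) :
    tPL (prefixL a m ++ [v]) = tP (Function.update a m v) (m + 1) := by
  unfold tPL
  have hlen : (prefixL a m ++ [v]).length = m + 1 := by simp [prefixL_length]
  rw [hlen]
  apply tP_congr
  intro i hi
  rcases Nat.lt_or_ge i m with hlt | hge
  · rw [List.getD_append _ _ _ _ (by rw [prefixL_length]; exact hlt), prefixL_getD hlt,
      Function.update_of_ne (by omega) _ _]
  · have : i = m := by omega
    subst this
    rw [List.getD_append_right _ _ _ _ (by rw [prefixL_length]),
      Function.update_self]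
    simp [prefixL_length]

lemma FF_tPL_append_iff {a b : ℕ → ℕ} {m v : ℕ} :
    FF a (tPL (prefixL b m ++ [v])) = true ↔ (∀ i < m, b i = a i) ∧ v = a m := by
  rw [tPL_prefixL_append, FF_tP_iff]
  constructor
  · rintro ⟨-, h⟩
    constructor
    · intro i hi
      have := h i (by omega)
      rwa [Function.update_of_ne (by omega)] at this
    · have := h m (by omega)
      rwa [Function.update_self] at this
  · rintro ⟨h1, h2⟩
    refine ⟨by omega, fun i hi => ?_⟩
    rcases Nat.lt_or_ge i m with hlt | hge
    · rw [Function.update_of_ne (by omega)]; exact h1 i hlt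
    · have : i = m := by omega
      subst this
      rwa [Function.update_self]

/-! ### decoding -/

def decPre (f : (ℕ → Bool) → Bool) : ℕ → List ℕ
  | 0 => []
  | m + 1 => decPre f m ++ [sInf {v | f (tPL (decPre f m ++ [v])) = true}]

def dec (f : (ℕ → Bool) → Bool) (m : ℕ) : ℕ := (decPre f (m + 1)).getD m 0

lemma decPre_FF (a : ℕ → ℕ) (m : ℕ) : decPre (FF a) m = prefixL a m := by
  induction m with
  | zero => rfl
  | succ n ih =>
    rw [decPre, ih, prefixL]
    congr 1
    have : {v | FF a (tPL (prefixL a n ++ [v])) = true} = {a n} := by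
      ext v
      rw [mem_setOf_eq, mem_singleton_iff, FF_tPL_append_iff]
      exact ⟨fun h => h.2, fun h => ⟨fun _ _ => rfl, h⟩⟩
    rw [this, csInf_singleton]

lemma dec_FF (a : ℕ → ℕ) : dec (FF a) = a := by
  funext m
  rw [dec, decPre_FF, prefixL]
  rw [List.getD_append_right _ _ _ _ (by rw [prefixL_length])]
  simp [prefixL_length]

/-- the key locality lemma for decoding. -/
lemma decPre_local {a : ℕ → ℕ} {f : (ℕ → Bool) → Bool} {m : ℕ}
    (h : ∀ k < m, ∀ v ≤ a k, f (tPL (prefixL a k ++ [v])) = FF a (tPL (prefixL a k ++ [v]))) :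
    decPre f m = prefixL a m := by
  induction m with
  | zero => rfl
  | succ n ih =>
    have hn : decPre f n = prefixL a n := ih (fun k hk => h k (by omega))
    rw [decPre, hn, prefixL]
    have hmem : a n ∈ {v | f (tPL (prefixL a n ++ [v])) = true} := by
      rw [mem_setOf_eq, h n (by omega) (a n) le_rfl]
      rw [FF_tPL_append_iff]
      exact ⟨fun _ _ => rfl, rfl⟩
    have hlow : ∀ v < a n, v ∉ {v | f (tPL (prefixL a n ++ [v])) = true} := by
      intro v hv hvm
      rw [mem_setOf_eq, h n (by omega) v (by omega)] at hvm
      rw [FF_tPL_append_iff] at hvm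
      omega
    have h1 : sInf {v | f (tPL (prefixL a n ++ [v])) = true} ≤ a n := Nat.sInf_le hmem
    have h2 : a n ≤ sInf {v | f (tPL (prefixL a n ++ [v])) = true} := by
      by_contra hc
      have hc' : sInf {v | f (tPL (prefixL a n ++ [v])) = true} < a n := by omega
      exact hlow _ hc' (Nat.sInf_mem ⟨a n, hmem⟩)
    have h3 : sInf {v | f (tPL (prefixL a n ++ [v])) = true} = a n := by omega
    rw [h3]

lemma dec_local {a : ℕ → ℕ} {f : (ℕ → Bool) → Bool} {m : ℕ}
    (h : ∀ k ≤ m, ∀ v ≤ a k, f (tPL (prefixL a k ++ [v])) = FF a (tPL (prefixL a k ++ [v]))) :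
    dec f m = a m := by
  rw [dec, decPre_local (fun k hk => h k (by omega)), prefixL]
  rw [List.getD_append_right _ _ _ _ (by rw [prefixL_length])]
  simp [prefixL_length]

/-! ### continuity -/

lemma continuous_FF : Continuous (fun a : ℕ → ℕ => FF a) := by
  apply continuous_pi
  intro x
  by_cases hx : ∃ b m, 1 ≤ m ∧ x = tP b m
  · obtain ⟨b, m, hm, rfl⟩ := hx
    rw [continuous_iff_continuousAt]
    intro a₀
    apply ContinuousAt.congr (continuousAt_const (y := FF a₀ (tP b m)))
    have : {a : ℕ → ℕ | ∀ i < m, a i = a₀ i} ∈ 𝓝 a₀ := by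
      have hopen : IsOpen {a : ℕ → ℕ | ∀ i < m, a i = a₀ i} := by
        have : {a : ℕ → ℕ | ∀ i < m, a i = a₀ i}
            = ⋂ i ∈ Finset.range m, (fun a : ℕ → ℕ => a i) ⁻¹' {a₀ i} := by
          ext y; simp
        rw [this]
        exact isOpen_biInter_finset fun i _ =>
          (continuous_apply i).isOpen_preimage _ (isOpen_discrete _)
      exact hopen.mem_nhds (fun i _ => rfl)
    filter_upwards [this] with a ha
    have h1 : FF a₀ (tP b m) = true ↔ FF a (tP b m) = true := by
      rw [FF_tP_iff, FF_tP_iff]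
      constructor
      · rintro ⟨h1, h2⟩
        exact ⟨h1, fun i hi => by rw [h2 i hi]; exact (ha i hi).symm⟩
      · rintro ⟨h1, h2⟩
        exact ⟨h1, fun i hi => by rw [h2 i hi]; exact ha i hi⟩
    cases hFa : FF a (tP b m) <;> cases hFa0 : FF a₀ (tP b m) <;> simp_all
  · have : (fun a : ℕ → ℕ => FF a x) = fun _ => false := by
      funext a
      rw [Bool.eq_false_iff]
      intro hc
      rw [FF] at hc
      rcases of_decide_eq_true hc with ⟨m, hm, hxm⟩
      exact hx ⟨a, m, hm, hxm⟩
    rw [this]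
    exact continuous_const

lemma continuous_dec : Continuous (fun f : ↥AA => dec f.val) := by
  apply continuous_pi
  intro m
  rw [continuous_iff_continuousAt]
  rintro ⟨f₀, hf₀⟩
  obtain ⟨a, rfl⟩ := hf₀
  apply ContinuousAt.congr (continuousAt_const (y := a m))
  set N : Set ↥AA := {f : ↥AA | ∀ k ≤ m, ∀ v ≤ a k,
      f.val (tPL (prefixL a k ++ [v])) = FF a (tPL (prefixL a k ++ [v]))} with hN
  have hNopen : IsOpen N := by
    have : N = ⋂ k ∈ Finset.range (m+1), ⋂ v ∈ Finset.range (a k + 1),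
        (fun f : ↥AA => f.val (tPL (prefixL a k ++ [v]))) ⁻¹'
          {FF a (tPL (prefixL a k ++ [v]))} := by
      ext f
      simp only [hN, mem_setOf_eq, mem_iInter, Finset.mem_range, mem_preimage,
        mem_singleton_iff]
      constructor
      · intro h k hk v hv; exact h k (by omega) v (by omega)
      · intro h k hk v hv; exact h k (by omega) v (by omega)
    rw [this]
    refine isOpen_biInter_finset fun k _ => isOpen_biInter_finset fun v _ => ?_
    exact (((continuous_apply _).comp continuous_subtype_val)).isOpen_preimage _
      (isOpen_discrete _)
  have hmemN : (⟨FF a, ⟨a, rfl⟩⟩ : ↥AA) ∈ N := fun k _ v _ => rfl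
  filter_upwards [hNopen.mem_nhds hmemN] with f hf
  exact (dec_local hf).symm

lemma FF_bij : Function.Bijective (fun a : ℕ → ℕ => (⟨FF a, ⟨a, rfl⟩⟩ : ↥AA)) := by
  constructor
  · intro a b hab
    exact FF_inj (congrArg Subtype.val hab)
  · rintro ⟨f, a, rfl⟩
    exact ⟨a, rfl⟩

def eqvAA : (ℕ → ℕ) ≃ ↥AA := Equiv.ofBijective _ FF_bij

/-- The homeomorphism. -/
def homeoAA : ↥AA ≃ₜ (ℕ → ℕ) :=
  Homeomorph.symm
    { toEquiv := eqvAA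
      continuous_toFun := Continuous.subtype_mk continuous_FF _
      continuous_invFun := by
        have hpt : ∀ f : ↥AA, eqvAA.symm f = dec f.val := by
          intro f
          rw [Equiv.symm_apply_eq]
          obtain ⟨g, a, rfl⟩ := f
          apply Subtype.ext
          show FF a = FF (dec (FF a))
          rw [dec_FF]
        exact continuous_dec.congr (fun f => (hpt f).symm) }


/-! ### Baire class one facts -/

lemma baireOne_bool {Z : Type*} [TopologicalSpace Z] {f : Z → Bool}
    (ht : IsFsigma (f ⁻¹' {true})) (hf : IsFsigma (f ⁻¹' {false})) :
    BaireClassOneFn f := by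
  intro U _
  by_cases h1 : true ∈ U <;> by_cases h2 : false ∈ U
  · have : U = univ := by ext b; cases b <;> simp [h1, h2]
    rw [this, preimage_univ]
    exact IsClosed.isFsigma' isClosed_univ
  · have : U = {true} := by ext b; cases b <;> simp [h1, h2]
    rw [this]; exact ht
  · have : U = {false} := by ext b; cases b <;> simp [h1, h2]
    rw [this]; exact hf
  · have : U = ∅ := by ext b; cases b <;> simp [h1, h2]
    rw [this, preimage_empty]
    exact IsClosed.isFsigma' isClosed_empty

lemma sep_FF {a : ℕ → ℕ} {x : ℕ → Bool} (hx : ∀ m, 1 ≤ m → x ≠ tP a m) (hxJ : x ≠ JP a) :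
    ∃ L, ∀ m, 1 ≤ m → tP a m ∉ Cyl x L := by
  have hc : ∃ i, x i ≠ JP a i := by
    by_contra h; push_neg at h; exact hxJ (funext h)
  have hc1 : x (Nat.find hc) ≠ JP a (Nat.find hc) := Nat.find_spec hc
  set c := Nat.find hc
  have hd : ∀ m, 1 ≤ m → ∃ i, x i ≠ tP a m i := fun m hm => by
    by_contra h; push_neg at h; exact hx m hm (funext h)
  classical
  set d : ℕ → ℕ := fun m => if h : ∃ i, x i ≠ tP a m i then Nat.find h else 0 with hddef
  refine ⟨max (c + 1) ((Finset.range (c + 1)).sup fun m => d m + 1), ?_⟩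
  intro m hm hmem
  rcases Nat.lt_or_ge c (bl a (m + 1)) with hlt | hge
  · have h1 : tP a m c = JP a c := tP_agree_JP hlt
    have h2 : tP a m c = x c := hmem c (lt_of_lt_of_le (by omega) (le_max_left _ _))
    exact hc1 (by rw [← h2, h1])
  · have hmc : m < c := by have := self_le_bl a (m + 1); omega
    have hdm := hd m hm
    have hspec : x (d m) ≠ tP a m (d m) := by
      rw [hddef]; simp only [dif_pos hdm]; exact Nat.find_spec hdm
    have hm2 : m ∈ Finset.range (c + 1) := Finset.mem_range.2 (by omega)
    have hlt2 : d m + 1 ≤ (Finset.range (c + 1)).sup fun m => d m + 1 :=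
      Finset.le_sup (f := fun m => d m + 1) hm2
    have hlt3 : ((Finset.range (c + 1)).sup fun m => d m + 1)
        ≤ max (c + 1) ((Finset.range (c + 1)).sup fun m => d m + 1) := le_max_right _ _
    have h3 : tP a m (d m) = x (d m) := hmem (d m) (by omega)
    exact hspec h3.symm

lemma FF_preimage_true (a : ℕ → ℕ) :
    FF a ⁻¹' {true} = ⋃ m : ℕ, (if 1 ≤ m then ({tP a m} : Set (ℕ → Bool)) else ∅) := by
  ext x
  simp only [mem_preimage, mem_singleton_iff, mem_iUnion]
  constructor
  · intro h
    rcases FF_true_iff.1 h with ⟨m, hm, rfl⟩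
    exact ⟨m, by rw [if_pos hm]; exact rfl⟩
  · rintro ⟨m, hm⟩
    by_cases h1 : 1 ≤ m
    · rw [if_pos h1] at hm
      rw [mem_singleton_iff.1 hm]
      exact FF_tP h1
    · rw [if_neg h1] at hm; exact absurd hm (notMem_empty x)

lemma FF_preimage_false (a : ℕ → ℕ) :
    FF a ⁻¹' {false} = {x | ∃ L, ∀ m, 1 ≤ m → tP a m ∉ Cyl x L} ∪ {JP a} := by
  ext x
  simp only [mem_preimage, mem_singleton_iff, mem_union, mem_setOf_eq]
  constructor
  · intro h
    by_cases hxJ : x = JP a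
    · exact Or.inr hxJ
    · refine Or.inl (sep_FF (fun m hm hxm => ?_) hxJ)
      rw [hxm] at h
      rw [FF_tP hm] at h
      exact Bool.noConfusion h
  · rintro (⟨L, hL⟩ | rfl)
    · rw [Bool.eq_false_iff]
      intro hc
      rcases FF_true_iff.1 hc with ⟨m, hm, rfl⟩
      exact hL m hm (self_mem_Cyl _ _)
    · exact FF_JP a a

lemma isOpen_sep_set (a : ℕ → ℕ) :
    IsOpen {x : ℕ → Bool | ∃ L, ∀ m, 1 ≤ m → tP a m ∉ Cyl x L} := by
  rw [isOpen_iff_mem_nhds]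
  rintro x ⟨L, hL⟩
  apply Filter.mem_of_superset (Cyl_mem_nhds x L)
  intro y hy
  exact ⟨L, fun m hm hmem => hL m hm (by rwa [Cyl_eq_Cyl hy] at hmem)⟩

lemma baireOne_FF (a : ℕ → ℕ) : BaireClassOneFn (FF a) := by
  apply baireOne_bool
  · rw [FF_preimage_true]
    apply isFsigma_iUnion_closed
    intro m
    by_cases h : 1 ≤ m
    · simp only [if_pos h]; exact isClosed_singleton
    · simp only [if_neg h]; exact isClosed_empty
  · rw [FF_preimage_false]
    exact isFsigma_union (isFsigma_open (isOpen_sep_set a))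
      (IsClosed.isFsigma' isClosed_singleton)

/-! ### the evaluation map -/

instance : TopologicalSpace.MetrizableSpace ↥AA := homeoAA.isEmbedding.metrizableSpace

def evalF : (ℕ → Bool) × ↥AA → Bool := fun p => p.2.val p.1

lemma val_FF_dec (f : ↥AA) : f.val = FF (dec f.val) := by
  obtain ⟨g, a, rfl⟩ := f
  show FF a = FF (dec (FF a))
  rw [dec_FF]

lemma JP_true_iff_le {a : ℕ → ℕ} {n : ℕ} : JP a n = true ↔ ∃ k, k ≤ n ∧ bl a k = n := by
  rw [JP_true_iff]
  constructor
  · rintro ⟨k, rfl⟩; exact ⟨k, self_le_bl a k, rfl⟩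
  · rintro ⟨k, _, rfl⟩; exact ⟨k, rfl⟩

lemma JP_congr {a b : ℕ → ℕ} {n : ℕ} (h : ∀ i < n, a i = b i) : JP a n = JP b n := by
  have hbl : ∀ k ≤ n, bl a k = bl b k := by
    intro k hk
    apply bl_congr (m := k) (fun i hi => h i (by
      have := self_le_bl a k
      omega)) k le_rfl
  have h1 : JP a n = true ↔ JP b n = true := by
    rw [JP_true_iff_le, JP_true_iff_le]
    constructor
    · rintro ⟨k, hk, rfl⟩; exact ⟨k, hk, (hbl k hk).symm⟩
    · rintro ⟨k, hk, rfl⟩; exact ⟨k, hk, hbl k hk⟩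
  cases hA : JP a n <;> cases hB : JP b n <;> simp_all

lemma continuous_prefix_det {g : (ℕ → ℕ) → Bool} (M : ℕ)
    (h : ∀ a b : ℕ → ℕ, (∀ i < M, a i = b i) → g a = g b) : Continuous g := by
  rw [continuous_iff_continuousAt]
  intro a₀
  apply ContinuousAt.congr (continuousAt_const (y := g a₀))
  have hopen : IsOpen {a : ℕ → ℕ | ∀ i < M, a i = a₀ i} := by
    have : {a : ℕ → ℕ | ∀ i < M, a i = a₀ i}
        = ⋂ i ∈ Finset.range M, (fun a : ℕ → ℕ => a i) ⁻¹' {a₀ i} := by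
      ext y; simp
    rw [this]
    exact isOpen_biInter_finset fun i _ =>
      (continuous_apply i).isOpen_preimage _ (isOpen_discrete _)
  filter_upwards [hopen.mem_nhds (fun i _ => rfl)] with a ha
  exact (h a a₀ ha).symm

lemma continuous_tP_coord (m i : ℕ) : Continuous (fun a : ℕ → ℕ => tP a m i) :=
  continuous_prefix_det m (fun a b h => by rw [tP_congr h])

lemma continuous_JP_coord (i : ℕ) : Continuous (fun a : ℕ → ℕ => JP a i) :=
  continuous_prefix_det i (fun a b h => JP_congr h)

def Delta : Set ((ℕ → Bool) × ↥AA) := {p | p.1 = JP (dec p.2.val)}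

lemma isClosed_Delta : IsClosed Delta := by
  apply isClosed_eq continuous_fst
  exact (continuous_pi continuous_JP_coord).comp (continuous_dec.comp continuous_snd)

def SS : Set ((ℕ → Bool) × ↥AA) :=
  ⋂ L : ℕ, {p | (∃ m, 1 ≤ m ∧ m ≤ L ∧ ∀ i < L, p.1 i = tP (dec p.2.val) m i)
    ∨ ∀ i < L, p.1 i = JP (dec p.2.val) i}

lemma isClosed_SS : IsClosed SS := by
  apply isClosed_iInter
  intro L
  have : {p : (ℕ → Bool) × ↥AA |
      (∃ m, 1 ≤ m ∧ m ≤ L ∧ ∀ i < L, p.1 i = tP (dec p.2.val) m i)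
        ∨ ∀ i < L, p.1 i = JP (dec p.2.val) i}
      = (⋃ m ∈ Finset.Icc 1 L, ⋂ i ∈ Finset.range L,
          {p : (ℕ → Bool) × ↥AA | p.1 i = tP (dec p.2.val) m i})
        ∪ ⋂ i ∈ Finset.range L, {p : (ℕ → Bool) × ↥AA | p.1 i = JP (dec p.2.val) i} := by
    ext p
    simp only [mem_setOf_eq, mem_union, mem_iUnion, mem_iInter, Finset.mem_Icc,
      Finset.mem_range]
    constructor
    · rintro (⟨m, h1, h2, h3⟩ | h)
      · exact Or.inl ⟨m, ⟨h1, h2⟩, h3⟩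
      · exact Or.inr h
    · rintro (⟨m, ⟨h1, h2⟩, h3⟩ | h)
      · exact Or.inl ⟨m, h1, h2, h3⟩
      · exact Or.inr h
  rw [this]
  apply IsClosed.union
  · apply Set.Finite.isClosed_biUnion (Finset.finite_toSet _)
    intro m _
    apply isClosed_biInter
    intro i _
    exact isClosed_eq ((continuous_apply i).comp continuous_fst)
      ((continuous_tP_coord m i).comp (continuous_dec.comp continuous_snd))
  · apply isClosed_biInter
    intro i _
    exact isClosed_eq ((continuous_apply i).comp continuous_fst)
      ((continuous_JP_coord i).comp (continuous_dec.comp continuous_snd))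

lemma SS_eq : SS = evalF ⁻¹' {true} ∪ Delta := by
  ext ⟨x, f⟩
  set a := dec f.val with hadef
  have hval : f.val = FF a := val_FF_dec f
  simp only [SS, mem_iInter, mem_setOf_eq, mem_union, mem_preimage, mem_singleton_iff,
    Delta, evalF]
  constructor
  · intro hS
    by_cases hxJ : x = JP a
    · exact Or.inr hxJ
    · left
      rw [hval]
      by_contra hf
      have hx : ∀ m, 1 ≤ m → x ≠ tP a m := by
        intro m hm hxm
        rw [hxm, FF_tP hm] at hf
        exact hf rfl
      obtain ⟨L₀, hsep⟩ := sep_FF hx hxJ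
      have hcne : ∃ i, x i ≠ JP a i := by
        by_contra h; push_neg at h; exact hxJ (funext h)
      set c := Nat.find hcne with hcdef
      have hc1 : x c ≠ JP a c := Nat.find_spec hcne
      rcases hS (max L₀ (c + 1)) with ⟨m, hm1, _, hagree⟩ | hagree
      · apply hsep m hm1
        intro i hi
        exact (hagree i (lt_of_lt_of_le hi (le_max_left _ _))).symm
      · exact hc1 (hagree c (lt_of_lt_of_le (by omega) (le_max_right _ _)))
  · rintro (hG | hD)
    · rw [hval] at hG
      rcases FF_true_iff.1 hG with ⟨m, hm, rfl⟩
      intro L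
      rcases le_or_gt m L with hml | hml
      · exact Or.inl ⟨m, hm, hml, fun i _ => rfl⟩
      · right
        intro i hi
        exact tP_agree_JP (by
          have h1 : L < bl a (m + 1) := by
            have := self_le_bl a (m + 1)
            omega
          omega)
    · intro L
      right
      intro i _
      rw [hD]

lemma tPL_prefixL (a : ℕ → ℕ) (m : ℕ) : tPL (prefixL a m) = tP a m := by
  unfold tPL
  rw [prefixL_length]
  exact tP_congr (fun i hi => prefixL_getD hi)

lemma evalF_preimage_true :
    evalF ⁻¹' {true} = ⋃ l : List ℕ,
      ({tPL l} ×ˢ {f : ↥AA | f.val (tPL l) = true}) := by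
  ext ⟨x, f⟩
  simp only [mem_preimage, mem_singleton_iff, mem_iUnion, mem_prod, mem_setOf_eq, evalF]
  constructor
  · intro h
    have hval : f.val = FF (dec f.val) := val_FF_dec f
    rw [hval] at h
    rcases FF_true_iff.1 h with ⟨m, hm, rfl⟩
    refine ⟨prefixL (dec f.val) m, ?_, ?_⟩
    · rw [tPL_prefixL]
    · rw [tPL_prefixL]
      exact (congrFun hval _).trans h
  · rintro ⟨l, rfl, h⟩
    exact h

lemma evalF_preimage_false :
    evalF ⁻¹' {false} = SSᶜ ∪ Delta := by
  have hGS : evalF ⁻¹' {true} ⊆ SS := by rw [SS_eq]; exact subset_union_left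
  have hDdisj : ∀ p ∈ Delta, evalF p = false := by
    rintro ⟨x, f⟩ hp
    have hval : f.val = FF (dec f.val) := val_FF_dec f
    simp only [Delta, mem_setOf_eq] at hp
    show f.val x = false
    rw [hval, hp]
    exact FF_JP _ _
  ext p
  simp only [mem_preimage, mem_singleton_iff, mem_union, mem_compl_iff]
  constructor
  · intro h
    by_cases hS : p ∈ SS
    · right
      rw [SS_eq] at hS
      rcases hS with hG | hD
      · rw [mem_preimage, mem_singleton_iff] at hG
        rw [hG] at h; exact absurd h (by simp)
      · exact hD
    · exact Or.inl hS
  · rintro (hS | hD)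
    · rw [Bool.eq_false_iff]
      intro hc
      exact hS (hGS hc)
    · exact hDdisj p hD

lemma baireOne_evalF : BaireClassOneFn evalF := by
  apply baireOne_bool
  · rw [evalF_preimage_true]
    apply isFsigma_iUnion_closed
    intro l
    apply IsClosed.prod isClosed_singleton
    have : {f : ↥AA | f.val (tPL l) = true}
        = (fun f : ↥AA => f.val (tPL l)) ⁻¹' {true} := rfl
    rw [this]
    exact IsClosed.preimage ((continuous_apply _).comp continuous_subtype_val)
      (isClosed_discrete _)
  · rw [evalF_preimage_false]
    exact isFsigma_union (isFsigma_open isClosed_SS.isOpen_compl)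
      (IsClosed.isFsigma' isClosed_Delta)

/-! ### path sequence facts -/

section Path

variable (W : ℕ → Set (ℕ → Bool)) (D : ℕ → ℕ → Bool) (x : ℕ → Bool)

lemma pathSeq_mem_range (n : ℕ) : pathSeq W D x n ∈ Set.range D := by
  induction n with
  | zero => rw [pathSeq]; exact ⟨0, rfl⟩
  | succ n ih =>
    rw [pathSeq]
    by_cases h : x = pathSeq W D x n
    · rw [if_pos h]; exact ih
    · rw [if_neg h]; exact ⟨_, rfl⟩

/-- the candidate set at step `n`. -/
def cand (n : ℕ) : Set ℕ :=
  {p | ∃ m, x ∈ W m ∧ D p ∈ W m ∧ ∀ k, k ≤ n → pathSeq W D x k ∉ W m}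

lemma pathSeq_succ_eq {n : ℕ} (h : x ≠ pathSeq W D x n) :
    pathSeq W D x (n + 1) = D (sInf (cand W D x n)) := by
  rw [pathSeq, if_neg h]
  rfl

variable {W D x}
variable (hW : IsGoodBasis W) (hD : DenseRange D) (hx : ∀ n, x ≠ pathSeq W D x n)

include hW hD hx in
lemma cand_nonempty (n : ℕ) : (cand W D x n).Nonempty := by
  classical
  set S : Set (ℕ → Bool) := ↑((Finset.range (n + 1)).image (pathSeq W D x)) with hS
  have hSfin : S.Finite := ((Finset.range (n + 1)).image (pathSeq W D x)).finite_toSet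
  have hxS : x ∈ Sᶜ := by
    simp only [hS, Finset.coe_image, mem_compl_iff, mem_image, Finset.mem_coe,
      Finset.mem_range, not_exists]
    rintro k ⟨-, hk⟩
    exact hx k hk.symm
  obtain ⟨v, hvB, hxv, hvsub⟩ :=
    hW.1.exists_subset_of_mem_open hxS hSfin.isClosed.isOpen_compl
  obtain ⟨m, rfl⟩ := hvB
  obtain ⟨p, hp⟩ := hD.exists_mem_open (hW.1.isOpen ⟨m, rfl⟩) ⟨x, hxv⟩
  refine ⟨p, m, hxv, hp, fun k hk hmem => ?_⟩
  have : pathSeq W D x k ∈ S := by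
    simp only [hS, Finset.coe_image, mem_image, Finset.mem_coe, Finset.mem_range]
    exact ⟨k, by omega, rfl⟩
  exact (hvsub hmem) this

include hW hD hx in
lemma pathSeq_succ_spec (n : ℕ) :
    ∃ m, x ∈ W m ∧ pathSeq W D x (n + 1) ∈ W m ∧
      ∀ k, k ≤ n → pathSeq W D x k ∉ W m := by
  have hmem := Nat.sInf_mem (cand_nonempty hW hD hx n)
  obtain ⟨m, h1, h2, h3⟩ := hmem
  rw [pathSeq_succ_eq W D x (hx n)]
  exact ⟨m, h1, h2, h3⟩

include hW hD hx in
lemma pathSeq_distinct {k n : ℕ} (h : k ≤ n) :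
    pathSeq W D x k ≠ pathSeq W D x (n + 1) := by
  obtain ⟨m, _, h2, h3⟩ := pathSeq_succ_spec hW hD hx n
  intro he
  exact h3 k h (he ▸ h2)

include hW hD hx in
lemma pIdx_inj : Function.Injective (fun n => sInf (cand W D x n)) := by
  intro n n' he
  have he' : sInf (cand W D x n) = sInf (cand W D x n') := he
  by_contra hne
  rcases Nat.lt_or_ge n n' with hlt | hge
  · apply pathSeq_distinct hW hD hx (show n + 1 ≤ n' by omega)
    rw [pathSeq_succ_eq W D x (hx n), pathSeq_succ_eq W D x (hx n'), he']
  · apply pathSeq_distinct hW hD hx (show n' + 1 ≤ n by omega)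
    rw [pathSeq_succ_eq W D x (hx n), pathSeq_succ_eq W D x (hx n'), he']

include hW hD hx in
lemma exists_pIdx_gt (P : ℕ) : ∃ N, ∀ n, n ≥ N → sInf (cand W D x n) > P := by
  have hfin : {n | sInf (cand W D x n) ≤ P}.Finite := by
    have : {n | sInf (cand W D x n) ≤ P}
        = (fun n => sInf (cand W D x n)) ⁻¹' (Set.Iic P) := rfl
    rw [this]
    exact Set.Finite.preimage ((pIdx_inj hW hD hx).injOn) (Set.finite_Iic P)
  obtain ⟨N, hN⟩ := hfin.bddAbove
  refine ⟨N + 1, fun n hn => ?_⟩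
  by_contra hc
  have hmem : sInf (cand W D x n) ≤ P := by omega
  have := hN (show n ∈ {n | sInf (cand W D x n) ≤ P} from hmem)
  try simp only [upperBounds, mem_setOf_eq] at this
  omega

include hW hD hx in
lemma pathSeq_hits (m : ℕ) (hxm : x ∈ W m) : ∃ k, pathSeq W D x k ∈ W m := by
  by_contra h
  push_neg at h
  obtain ⟨q, hq⟩ := hD.exists_mem_open (hW.1.isOpen ⟨m, rfl⟩) ⟨x, hxm⟩
  have hall : ∀ n, sInf (cand W D x n) ≤ q := fun n =>
    Nat.sInf_le ⟨m, hxm, hq, fun k _ => h k⟩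
  obtain ⟨N, hN⟩ := exists_pIdx_gt hW hD hx q
  exact absurd (hall N) (by have := hN N le_rfl; omega)

include hW hD hx in
lemma pathSeq_tendsto_of_ne : Tendsto (pathSeq W D x) atTop (𝓝 x) := by
  rw [tendsto_nhds]
  intro U hU hxU
  obtain ⟨m₀, hm₀⟩ := hW.2 U hU x hxU
  classical
  set N : ℕ := (Finset.range m₀).sup
    (fun m => if h : x ∈ W m then (pathSeq_hits hW hD hx m h).choose + 1 else 0) with hNdef
  have key : ∀ n, n ≥ N → pathSeq W D x (n + 1) ∈ U := by
    intro n hn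
    obtain ⟨m, h1, h2, h3⟩ := pathSeq_succ_spec hW hD hx n
    rcases Nat.lt_or_ge m m₀ with hlt | hge
    · exfalso
      have hk := (pathSeq_hits hW hD hx m h1).choose_spec
      set k := (pathSeq_hits hW hD hx m h1).choose
      have hkN : k + 1 ≤ N := by
        have h5 := Finset.le_sup (f := fun m => if h : x ∈ W m then
          (pathSeq_hits hW hD hx m h).choose + 1 else 0) (Finset.mem_range.2 hlt)
        have h6 : (if h : x ∈ W m then (pathSeq_hits hW hD hx m h).choose + 1 else 0)
            ≤ N := h5
        rw [dif_pos h1] at h6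
        exact h6
      exact h3 k (by omega) hk
    · exact hm₀ m hge h1 h2
  have : {n | pathSeq W D x n ∈ U} ∈ atTop := by
    rw [Filter.mem_atTop_sets]
    refine ⟨N + 1, fun n hn => ?_⟩
    obtain ⟨k, rfl⟩ : ∃ k, n = k + 1 := ⟨n - 1, by omega⟩
    exact key k (by omega)
  exact this

end Path

lemma pathSeq_stabilize (W : ℕ → Set (ℕ → Bool)) (D : ℕ → ℕ → Bool) (x : ℕ → Bool)
    {n₀ : ℕ} (h : x = pathSeq W D x n₀) : ∀ n, n ≥ n₀ → pathSeq W D x n = x := by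
  intro n hn
  induction n with
  | zero =>
    have : n₀ = 0 := by omega
    rw [← this, ← h]
  | succ k ih =>
    rcases Nat.lt_or_ge k n₀ with hlt | hge
    · have : n₀ = k + 1 := by omega
      rw [← this, ← h]
    · have hk := ih hge
      rw [pathSeq, if_pos (by rw [hk])]
      exact hk

lemma pathSeq_tendsto {W : ℕ → Set (ℕ → Bool)} {D : ℕ → ℕ → Bool}
    (hW : IsGoodBasis W) (hD : DenseRange D) (x : ℕ → Bool) :
    Tendsto (pathSeq W D x) atTop (𝓝 x) := by
  by_cases h : ∃ n, x = pathSeq W D x n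
  · obtain ⟨n₀, hn₀⟩ := h
    exact tendsto_atTop_of_eventually_const (pathSeq_stabilize W D x hn₀)
  · push_neg at h
    exact pathSeq_tendsto_of_ne hW hD h

/-! ### sites must be in the range of `D` -/

lemma tP_isolated {a : ℕ → ℕ} {m m' : ℕ}
    (h : tP a m' ∈ Cyl (tP a m) (bl a (m + 1) + 1)) : m' = m := by
  by_contra hne
  rcases Nat.lt_or_ge m' m with hlt | hge
  · have h1 : tP a m (bl a (m' + 1)) = true := tP_at_bl (by omega)
    have h2 : tP a m' (bl a (m' + 1)) = false := tP_false_at_bl_succ a m'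
    have h3 := h (bl a (m' + 1)) (by
      have := bl_le_bl (a := a) (show m' + 1 ≤ m by omega)
      have := bl_lt_bl (a := a) (show m < m + 1 by omega)
      omega)
    rw [h1] at h3
    rw [h3] at h2
    exact Bool.noConfusion h2
  · have hgt : m < m' := by omega
    have h1 : tP a m' (bl a (m + 1)) = true := tP_at_bl (by omega)
    have h2 : tP a m (bl a (m + 1)) = false := tP_false_at_bl_succ a m
    have h3 := h (bl a (m + 1)) (by omega)
    rw [h1, h2] at h3
    exact Bool.noConfusion h3

lemma site_mem_range {W : ℕ → Set (ℕ → Bool)} {D : ℕ → ℕ → Bool}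
    (hW : IsGoodBasis W) (hD : DenseRange D)
    (hrec : ∀ g ∈ AA, RecoverableWith W D g) (a : ℕ → ℕ) {m : ℕ} (hm : 1 ≤ m) :
    tP a m ∈ Set.range D := by
  have h1 := hrec (FF a) ⟨a, rfl⟩ (tP a m)
  rw [FF_tP hm] at h1
  have h2 : ∀ᶠ n in atTop, FF a (pathSeq W D (tP a m) n) = true := by
    rw [nhds_discrete, Filter.tendsto_pure] at h1
    exact h1
  have h3 : ∀ᶠ n in atTop,
      pathSeq W D (tP a m) n ∈ Cyl (tP a m) (bl a (m + 1) + 1) :=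
    pathSeq_tendsto hW hD (tP a m) (Cyl_mem_nhds _ _)
  obtain ⟨n, hFF, hCyl⟩ := (h2.and h3).exists
  rcases FF_true_iff.1 hFF with ⟨m', _, heq⟩
  have hmm : m' = m := tP_isolated (heq ▸ hCyl)
  have : pathSeq W D (tP a m) n = tP a m := by rw [heq, hmm]
  exact this ▸ pathSeq_mem_range W D (tP a m) n

/-! ### the diagonal sequence -/

def rbF (D : ℕ → ℕ → Bool) (base Q : ℕ) : ℕ :=
  (Finset.range Q).sup fun p =>
    if h : ∃ j, D p (base + 1 + j) = true then Nat.find h + 1 else 0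

def stepF (W : ℕ → Set (ℕ → Bool)) (D : ℕ → ℕ → Bool) (t0 : ℕ → Bool) (base m : ℕ) : ℕ :=
  max (rbF D base (max (sInf {p | D p = t0}) m + 1) + 2)
    (sInf {R | ∃ mi, t0 ∈ W mi ∧
      W mi ⊆ Cyl t0 (base + 1 + rbF D base (max (sInf {p | D p = t0}) m + 1) + 1) ∧
      Cyl t0 R ⊆ W mi})

def diagL (W : ℕ → Set (ℕ → Bool)) (D : ℕ → ℕ → Bool) : ℕ → List ℕ
  | 0 => []
  | m + 1 => diagL W D m ++
      [stepF W D (tPL (diagL W D m)) (bl (fun i => (diagL W D m).getD i 0) m) m]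

def diag (W : ℕ → Set (ℕ → Bool)) (D : ℕ → ℕ → Bool) : ℕ → ℕ :=
  fun m => (diagL W D (m + 1)).getD m 0

lemma diagL_eq_prefixL (W : ℕ → Set (ℕ → Bool)) (D : ℕ → ℕ → Bool) (m : ℕ) :
    diagL W D m = prefixL (diag W D) m := by
  induction m with
  | zero => rfl
  | succ n ih =>
    rw [diagL, prefixL, ih]
    congr 1
    have : diag W D n = stepF W D (tPL (diagL W D n))
        (bl (fun i => (diagL W D n).getD i 0) n) n := by
      rw [diag, diagL]
      rw [List.getD_append_right _ _ _ _ (by rw [ih, prefixL_length])]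
      rw [ih, prefixL_length]
      simp
    rw [this, ih]

lemma diagL_length (W : ℕ → Set (ℕ → Bool)) (D : ℕ → ℕ → Bool) (m : ℕ) :
    (diagL W D m).length = m := by
  rw [diagL_eq_prefixL, prefixL_length]

lemma diag_spec (W : ℕ → Set (ℕ → Bool)) (D : ℕ → ℕ → Bool) (m : ℕ) :
    diag W D m = stepF W D (tP (diag W D) m) (bl (diag W D) m) m := by
  have h1 : diag W D m = stepF W D (tPL (diagL W D m))
      (bl (fun i => (diagL W D m).getD i 0) m) m := by
    rw [diag, diagL]
    rw [List.getD_append_right _ _ _ _ (by rw [diagL_length])]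
    rw [diagL_length]
    simp
  rw [h1, diagL_eq_prefixL, tPL_prefixL]
  congr 1
  exact bl_congr (fun i hi => prefixL_getD hi) m le_rfl

/-! ### the trap -/

theorem not_unif_recoverable :
    ¬ ∃ W : ℕ → Set (ℕ → Bool), IsGoodBasis W ∧
        ∃ D : ℕ → (ℕ → Bool), DenseRange D ∧ ∀ f ∈ AA, RecoverableWith W D f := by
  rintro ⟨W, hW, D, hD, hrec⟩
  classical
  set a : ℕ → ℕ := diag W D with hadef
  -- stage quantities
  set P : ℕ → ℕ := fun m => sInf {p | D p = tP a m} with hPdef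
  set Q : ℕ → ℕ := fun m => max (P m) m + 1 with hQdef
  set MR : ℕ → ℕ := fun m => rbF D (bl a m) (Q m) with hMRdef
  set G : ℕ → ℕ := fun m => bl a m + 1 + MR m with hGdef
  have hstep : ∀ m, a m = max (MR m + 2)
      (sInf {R | ∃ mi, tP a m ∈ W mi ∧ W mi ⊆ Cyl (tP a m) (G m + 1) ∧
        Cyl (tP a m) R ⊆ W mi}) := by
    intro m
    have := diag_spec W D m
    rw [stepF] at this
    exact this
  have haMR : ∀ m, MR m + 2 ≤ a m := fun m => by
    rw [hstep m]; exact le_max_left _ _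
  have haRV : ∀ m, sInf {R | ∃ mi, tP a m ∈ W mi ∧
      W mi ⊆ Cyl (tP a m) (G m + 1) ∧ Cyl (tP a m) R ⊆ W mi} ≤ a m := fun m => by
    conv_rhs => rw [hstep m]
    exact le_max_right _ _
  -- rbF bound helper
  have hrb : ∀ m p, p < Q m → (∃ j, D p (bl a m + 1 + j) = true) →
      ∀ hp : ∃ j, D p (bl a m + 1 + j) = true, Nat.find hp + 1 ≤ MR m := by
    intro m p hpQ _ hp
    have h5 := Finset.le_sup (f := fun p =>
      if h : ∃ j, D p (bl a m + 1 + j) = true then Nat.find h + 1 else 0)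
      (Finset.mem_range.2 hpQ)
    have h6 : (if h : ∃ j, D p (bl a m + 1 + j) = true then Nat.find h + 1 else 0)
        ≤ MR m := h5
    rw [dif_pos hp] at h6
    exact h6
  -- (K1) `JP a` is not in the range of `D`
  have hK1 : JP a ∉ Set.range D := by
    rintro ⟨j, hj⟩
    have hjQ : j < Q j := by
      have hq2 : Q j = max (P j) j + 1 := rfl
      have := le_max_right (P j) j
      omega
    have hEx : ∃ j', D j (bl a j + 1 + j') = true := by
      refine ⟨a j + 1, ?_⟩
      rw [hj]
      have hbs : bl a j + 1 + (a j + 1) = bl a (j + 1) := by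
        have := bl_succ a j
        omega
      rw [hbs]
      exact JP_at_bl a (j + 1)
    have hfind : a j + 1 ≤ Nat.find hEx := by
      by_contra hc
      have hspec0 := Nat.find_spec hEx
      have hspec : JP a (bl a j + 1 + Nat.find hEx) = true := by
        rw [← hj]; exact hspec0
      rcases JP_true_iff.1 hspec with ⟨k, hk⟩
      rcases Nat.lt_or_ge j k with hlt | hge
      · have h7 := bl_le_bl (a := a) (show j + 1 ≤ k by omega)
        have hbs := bl_succ a j
        omega
      · have := bl_le_bl (a := a) hge
        omega
    have := hrb j j hjQ hEx hEx
    have := haMR j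
    omega
  -- (K2) small indices stay away from the `G`-cylinder
  have hK2 : ∀ m p, p < P m → D p ∉ Cyl (JP a) (G m + 1) := by
    intro m p hp hmem
    have hne : D p ≠ tP a m := by
      intro h
      have : P m ≤ p := Nat.sInf_le h
      omega
    have hpQ : p < Q m := by
      have hq2 : Q m = max (P m) m + 1 := rfl
      have := le_max_left (P m) m
      omega
    have hJf : ∀ i, bl a m < i → i ≤ G m → JP a i = false := by
      intro i hi1 hi2
      rw [← Bool.not_eq_true, JP_true_iff]
      rintro ⟨k, hk⟩
      rcases Nat.lt_or_ge m k with hlt | hge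
      · have h1 := bl_le_bl (a := a) (show m + 1 ≤ k by omega)
        have hbs := bl_succ a m
        have h2 := haMR m
        have hg2 : G m = bl a m + 1 + MR m := rfl
        omega
      · have := bl_le_bl (a := a) hge
        omega
    by_cases hEx : ∃ j, D p (bl a m + 1 + j) = true
    · have hb := hrb m p hpQ hEx hEx
      have hspec := Nat.find_spec hEx
      have hpos : bl a m + 1 + Nat.find hEx < G m + 1 := by
        have hg2 : G m = bl a m + 1 + MR m := rfl
        omega
      have h1 := hmem (bl a m + 1 + Nat.find hEx) hpos
      rw [hspec] at h1
      have h2 := hJf (bl a m + 1 + Nat.find hEx) (by omega) (by omega)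
      rw [h2] at h1
      exact Bool.noConfusion h1
    · push_neg at hEx
      apply hne
      funext i
      rcases Nat.lt_or_ge (bl a m) i with hgt | hle
      · have h1 : D p i = false := by
          have h' := hEx (i - bl a m - 1)
          have hi' : bl a m + 1 + (i - bl a m - 1) = i := by omega
          rw [hi'] at h'
          exact Bool.eq_false_iff.2 h'
        have h2 : tP a m i = false := by
          rw [← Bool.not_eq_true, tP_true_iff]
          rintro ⟨k, hk1, hk2⟩
          have := bl_le_bl (a := a) hk1
          omega
        rw [h1, h2]
      · have h1 : D p i = JP a i := hmem i (by
          have hg2 : G m = bl a m + 1 + MR m := rfl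
          omega)
        have h2 : tP a m i = JP a i := tP_agree_JP (by
          have := bl_lt_succ a m
          omega)
        rw [h1, h2]
  -- (K3) choose the basic set around `tP a m`
  have hK3 : ∀ m, ∃ mi, tP a m ∈ W mi ∧ W mi ⊆ Cyl (tP a m) (G m + 1) ∧
      Cyl (tP a m) (sInf {R | ∃ mi, tP a m ∈ W mi ∧ W mi ⊆ Cyl (tP a m) (G m + 1) ∧
        Cyl (tP a m) R ⊆ W mi}) ⊆ W mi := by
    intro m
    have hne : {R | ∃ mi, tP a m ∈ W mi ∧ W mi ⊆ Cyl (tP a m) (G m + 1) ∧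
        Cyl (tP a m) R ⊆ W mi}.Nonempty := by
      obtain ⟨v, hvB, hxv, hvsub⟩ := hW.1.exists_subset_of_mem_open
        (self_mem_Cyl (tP a m) (G m + 1)) (isOpen_Cyl _ _)
      obtain ⟨mi, rfl⟩ := hvB
      obtain ⟨R, hR⟩ := exists_Cyl_subset (hW.1.isOpen ⟨mi, rfl⟩) hxv
      exact ⟨R, mi, hxv, hvsub, hR⟩
    exact Nat.sInf_mem hne
  -- basic facts about `x := JP a`
  have hxne : ∀ n, JP a ≠ pathSeq W D (JP a) n := by
    intro n h
    exact hK1 (h ▸ pathSeq_mem_range W D (JP a) n)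
  -- (K4) the trap at each level
  have htrap : ∀ m, 1 ≤ m → ∃ n, pathSeq W D (JP a) n = tP a m := by
    intro m hm
    obtain ⟨mi₀, hmi1, hmi2, hmi3⟩ := hK3 m
    have hPmem : D (P m) = tP a m := by
      have hne : {p | D p = tP a m}.Nonempty := site_mem_range hW hD hrec a hm
      exact Nat.sInf_mem hne
    have hagr : JP a ∈ Cyl (tP a m) (bl a (m + 1)) := by
      intro i hi
      exact (tP_agree_JP hi).symm
    have hGlt : G m + 1 ≤ bl a (m + 1) := by
      have := haMR m
      have hg2 : G m = bl a m + 1 + MR m := rfl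
      have hbs := bl_succ a m
      omega
    have hJmem : JP a ∈ Cyl (tP a m) (G m + 1) := Cyl_anti hGlt hagr
    have hCylEq : Cyl (JP a) (G m + 1) = Cyl (tP a m) (G m + 1) := Cyl_eq_Cyl hJmem
    have hJRV : JP a ∈ W mi₀ := by
      apply hmi3
      apply Cyl_anti _ hagr
      have h1 := haRV m
      have hbs := bl_succ a m
      have h2 := haMR m
      omega
    have hent : ∃ n, pathSeq W D (JP a) n ∈ Cyl (JP a) (G m + 1) := by
      have h8 := pathSeq_tendsto hW hD (JP a) (Cyl_mem_nhds (JP a) (G m + 1))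
      have hev : ∀ᶠ n in atTop, pathSeq W D (JP a) n ∈ Cyl (JP a) (G m + 1) := h8
      exact hev.exists
    set n₀ := Nat.find hent with hn₀def
    have hn1 : pathSeq W D (JP a) n₀ ∈ Cyl (JP a) (G m + 1) := Nat.find_spec hent
    have hn2 : ∀ k, k < n₀ → pathSeq W D (JP a) k ∉ Cyl (JP a) (G m + 1) :=
      fun k hk => Nat.find_min hent hk
    refine ⟨n₀, ?_⟩
    rcases Nat.eq_zero_or_pos n₀ with h0 | hpos
    · rw [h0] at hn1
      rw [pathSeq] at hn1
      rw [h0, pathSeq]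
      have hP0 : P m = 0 := by
        by_contra hc
        exact hK2 m 0 (by omega) hn1
      rw [← hP0]
      exact hPmem
    · obtain ⟨k, hk⟩ : ∃ k, n₀ = k + 1 := ⟨n₀ - 1, by omega⟩
      rw [hk] at hn1
      rw [hk]
      rw [pathSeq_succ_eq W D (JP a) (hxne k)] at hn1
      rw [pathSeq_succ_eq W D (JP a) (hxne k)]
      have hPin : P m ∈ cand W D (JP a) k := by
        refine ⟨mi₀, hJRV, ?_, ?_⟩
        · rw [hPmem]; exact hmi1
        · intro k' hk' hin
          exact hn2 k' (by omega) (hCylEq ▸ hmi2 hin)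
      have hle : sInf (cand W D (JP a) k) ≤ P m := Nat.sInf_le hPin
      have heq : sInf (cand W D (JP a) k) = P m := by
        by_contra hc
        have hlt2 : sInf (cand W D (JP a) k) < P m := by omega
        exact hK2 m _ hlt2 hn1
      rw [heq, hPmem]
  -- (K5) contradiction with recoverability at `JP a`
  have h1 := hrec (FF a) ⟨a, rfl⟩ (JP a)
  rw [FF_JP] at h1
  rw [nhds_discrete, Filter.tendsto_pure] at h1
  obtain ⟨N, hN⟩ := Filter.eventually_atTop.1 h1
  choose nf hnf using fun m : ℕ => htrap (m + 1) (by omega)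
  have hinj : Function.Injective nf := by
    intro m m' he
    have : tP a (m + 1) = tP a (m' + 1) := by rw [← hnf m, ← hnf m', he]
    have := (tP_inj this).1
    omega
  have hlt : ∀ m, nf m < N := by
    intro m
    by_contra hc
    have := hN (nf m) (by omega)
    rw [hnf m, FF_tP (by omega)] at this
    exact Bool.noConfusion this
  have : (Finset.range (N + 1)).card ≤ (Finset.range N).card := by
    apply Finset.card_le_card_of_injOn nf
    · intro m _
      exact Finset.mem_range.2 (hlt m)
    · exact hinj.injOn
  simp only [Finset.card_range] at this
  omega

end Lec

/-- There is a set `A ⊆ B₁(2^ω, 2)` (pointwise convergence topology), homeomorphic to the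
Baire space `ℕ → ℕ`, which is not uniformly recoverable, and yet the evaluation map
`φ(x,f) = f(x)` on `2^ω × A` is Baire class one. -/
theorem exists_baireHomeomorphic_not_uniformlyRecoverable_eval_baireClassOne :
    ∃ A : Set ((ℕ → Bool) → Bool),
      (∀ f ∈ A, BaireClassOneFn f) ∧
      Nonempty (↥A ≃ₜ (ℕ → ℕ)) ∧
      ¬ (∃ W : ℕ → Set (ℕ → Bool), IsGoodBasis W ∧
          ∃ D : ℕ → (ℕ → Bool), DenseRange D ∧ ∀ f ∈ A, RecoverableWith W D f) ∧
      BaireClassOneFn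
        (fun p : (ℕ → Bool) × ↥A => (p.2 : (ℕ → Bool) → Bool) p.1) := by
  refine ⟨Lec.AA, ?_, ⟨Lec.homeoAA⟩, Lec.not_unif_recoverable, Lec.baireOne_evalF⟩
  rintro f ⟨a, rfl⟩
  exact Lec.baireOne_FF a
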